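/- Let f, g, g̃, h : ℝ → ℝ with f, g, g̃ real analytic, g(0) = g̃(0) = 0, and suppose the derivative f' is not constant. If f(x + g(y)) = f(x + g̃(y)) + h(y) for all x, y ∈ ℝ, then g = g̃. -/
import Mathlib


theorem stmt_2 (f g g' h : ℝ → ℝ)
    (hf : ∀ x, AnalyticAt ℝ f x) (hg : ∀ x, AnalyticAt ℝ g x)
    (hg' : ∀ x, AnalyticAt ℝ g' x)
    (hg0 : g 0 = 0) (hg'0 : g' 0 = 0)
    (hf' : ¬ ∃ c : ℝ, ∀ x, deriv f x = c)
    (heq : ∀ x y : ℝ, f (x + g y) = f (x + g' y) + h y) :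
    g = g' := by
  by_contra hne
  obtain ⟨y₀, hy₀⟩ : ∃ y, g y ≠ g' y := Function.ne_iff.mp hne
  -- the set of "quasi-periods" of f
  set S : Set ℝ := {t | ∀ x, f (x + t) = f x + (f t - f 0)} with hS
  have hzero : (0 : ℝ) ∈ S := by intro x; simp
  have hadd : ∀ s t, s ∈ S → t ∈ S → s + t ∈ S := by
    intro s t hs ht x
    have h1 : f (x + (s + t)) = f (x + s) + (f t - f 0) := by
      rw [← add_assoc]; exact ht (x + s)
    have h2 : f (s + t) = f s + (f t - f 0) := ht s
    rw [h1, hs x, h2]; ring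
  have hneg : ∀ t, t ∈ S → -t ∈ S := by
    intro t ht x
    have h1 : f ((x + -t) + t) = f (x + -t) + (f t - f 0) := ht (x + -t)
    have h2 : f (-t + t) = f (-t) + (f t - f 0) := ht (-t)
    simp only [neg_add_cancel] at h2
    have h3 : x + -t + t = x := by ring
    rw [h3] at h1
    have : f (x + -t) = f x - (f t - f 0) := by linarith
    rw [this]
    have : f (-t) = f 0 - (f t - f 0) := by linarith
    rw [this]; ring
  -- every value g y - g' y is a quasi-period
  have hd : ∀ y, g y - g' y ∈ S := by
    intro y
    have key : ∀ x, f (x + (g y - g' y)) = f x + h y := by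
      intro x
      have := heq (x - g' y) y
      have e1 : x - g' y + g y = x + (g y - g' y) := by ring
      have e2 : x - g' y + g' y = x := by ring
      rw [e1, e2] at this; exact this
    have h0 : f (g y - g' y) = f 0 + h y := by simpa using key 0
    intro x
    rw [key x, h0]; ring
  -- d is continuous, d 0 = 0, d y₀ ≠ 0, so by IVT S contains an interval around 0
  set d : ℝ → ℝ := fun y => g y - g' y with hdd
  have hdc : Continuous d := by
    exact (continuous_iff_continuousAt.mpr fun x => (hg x).continuousAt).sub
      (continuous_iff_continuousAt.mpr fun x => (hg' x).continuousAt)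
  have hd0 : d 0 = 0 := by simp [hdd, hg0, hg'0]
  have hrange : ∀ y, d y ∈ S := hd
  set ε := |d y₀| with hε
  have hεpos : 0 < ε := abs_pos.mpr (sub_ne_zero.mpr hy₀)
  have hIcc : Set.Icc (-ε) ε ⊆ S := by
    rcases abs_cases (d y₀) with ⟨he, _⟩ | ⟨he, _⟩
    · -- ε = d y₀
      have hsub : Set.Icc (0 : ℝ) ε ⊆ S := by
        intro t ht
        have : t ∈ Set.Icc (d 0) (d y₀) := by rw [hd0, ← he]; exact ht
        obtain ⟨y, hy⟩ := intermediate_value_univ 0 y₀ hdc this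
        rw [← hy]; exact hrange y
      intro t ht
      rcases le_or_gt 0 t with h0t | h0t
      · exact hsub ⟨h0t, ht.2⟩
      · have : -t ∈ S := hsub ⟨by linarith, by have := ht.1; linarith⟩
        simpa using hneg _ this
    · -- ε = -(d y₀)
      have hsub : Set.Icc (-ε) (0 : ℝ) ⊆ S := by
        intro t ht
        have : t ∈ Set.Icc (d y₀) (d 0) := by
          rw [hd0]; constructor
          · have := ht.1; linarith
          · exact ht.2
        obtain ⟨y, hy⟩ := intermediate_value_univ y₀ 0 hdc this
        rw [← hy]; exact hrange y
      intro t ht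
      rcases le_or_gt t 0 with h0t | h0t
      · exact hsub ⟨ht.1, h0t⟩
      · have : -t ∈ S := hsub ⟨by have := ht.2; linarith, by linarith⟩
        simpa using hneg _ this
  -- S is all of ℝ by an Archimedean argument
  have hall : ∀ t : ℝ, t ∈ S := by
    intro t
    obtain ⟨n, hn⟩ := exists_nat_ge (|t| / ε)
    have hn1 : |t| / ε ≤ (n + 1 : ℕ) := by push_cast; push_cast at hn; linarith
    have hnpos : (0 : ℝ) < (n + 1 : ℕ) := by positivity
    have hmem : t / (n + 1 : ℕ) ∈ S := by
      apply hIcc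
      have habs : |t / (n + 1 : ℕ)| ≤ ε := by
        rw [abs_div, abs_of_pos hnpos, div_le_iff₀ hnpos, mul_comm]
        calc |t| ≤ (|t| / ε) * ε := by rw [div_mul_cancel₀]; exact hεpos.ne'
          _ ≤ (n + 1 : ℕ) * ε := by
              apply mul_le_mul_of_nonneg_right hn1 hεpos.le
      constructor
      · have := neg_abs_le (t / (n + 1 : ℕ)); linarith
      · exact le_trans (le_abs_self _) habs
    have hsmul : ∀ m : ℕ, ∀ s ∈ S, (m : ℝ) * s ∈ S := by
      intro m
      induction m with
      | zero => intro s _; simpa using hzero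
      | succ k ih =>
        intro s hs
        have : ((k + 1 : ℕ) : ℝ) * s = (k : ℝ) * s + s := by push_cast; ring
        rw [this]; exact hadd _ _ (ih s hs) hs
    have := hsmul (n + 1) _ hmem
    rwa [mul_div_cancel₀ _ hnpos.ne'] at this
  -- deduce that f' is constant: contradiction
  apply hf'
  refine ⟨deriv f 0, fun x => ?_⟩
  have hfun : (fun t => f (x + t)) = (fun t => f t + (f x - f 0)) := by
    funext t
    have := hall t x
    rw [this]; ring
  have h1 : deriv (fun t => f (x + t)) 0 = deriv f x := by
    rw [deriv_comp_const_add]; simp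
  have h2 : deriv (fun t : ℝ => f t + (f x - f 0)) 0 = deriv f 0 := by
    simp [deriv_add_const]
  rw [← h1, hfun, h2]
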